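/- The sequence of optimal packing densities of the S²×R space groups 1q.I.1, given by δ_q = V(π/q) · q² / (8π²) for integers q ≥ 3, is strictly decreasing in q: for all integers 3 ≤ q < q' one has δ_{q'} < δ_q. (Here the optimal ball radius is R = π/q and the Dirichlet–Voronoi cell is a prism over a spherical digon of angle 2π/q, with base area 4π/q and height 2π/q, hence volume 8π²/q².) -/

import Mathlib

open Real

/-- `V ρ` is the volume of the geodesic ball of radius `ρ` in `S²×R` geometry
(valid for `ρ ∈ [0, π)`). -/
noncomputable def V (ρ : ℝ) : ℝ :=
  2 * π * ∫ τ in (0 : ℝ)..ρ, ∫ v in (-(π/2))..(π/2), τ * Real.sin (τ * Real.cos v)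

namespace DensityAux

open Set intervalIntegral

/-- inner integral -/
noncomputable def Iinn (t : ℝ) : ℝ := ∫ v in (-(π/2))..(π/2), Real.sin (t * Real.cos v)

lemma Iinn_cont : Continuous Iinn := by
  have : Continuous (Function.uncurry fun (t v : ℝ) => Real.sin (t * Real.cos v)) := by
    fun_prop
  exact intervalIntegral.continuous_parametric_intervalIntegral_of_continuous' this _ _

lemma Iinn_mono {x y : ℝ} (hx : 0 ≤ x) (hxy : x < y) (hy : y ≤ π/2) : Iinn x < Iinn y := by
  have hpi : (0:ℝ) < π/2 := by positivity
  apply intervalIntegral.integral_lt_integral_of_continuousOn_of_le_of_exists_lt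
    (by linarith : -(π/2) < π/2)
  · fun_prop
  · fun_prop
  · intro v hv
    have hc : 0 ≤ Real.cos v := Real.cos_nonneg_of_mem_Icc ⟨hv.1.le, hv.2⟩
    have hc1 : Real.cos v ≤ 1 := Real.cos_le_one v
    apply Real.sin_le_sin_of_le_of_le_pi_div_two (by nlinarith) (by nlinarith)
    nlinarith
  · refine ⟨0, ⟨by linarith, by linarith⟩, ?_⟩
    simp only [Real.cos_zero, mul_one]
    exact Real.sin_lt_sin_of_lt_of_le_pi_div_two (by linarith) hy hxy

/-- rescaled profile -/
noncomputable def F (ρ : ℝ) : ℝ := ∫ s in (0:ℝ)..1, s * Iinn (ρ * s)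

lemma F_mono {a b : ℝ} (ha : 0 < a) (hab : a < b) (hb : b ≤ π/2) : F a < F b := by
  apply intervalIntegral.integral_lt_integral_of_continuousOn_of_le_of_exists_lt
    (by norm_num : (0:ℝ) < 1)
  · exact (continuous_id.mul (Iinn_cont.comp (continuous_const.mul continuous_id))).continuousOn
  · exact (continuous_id.mul (Iinn_cont.comp (continuous_const.mul continuous_id))).continuousOn
  · intro s hs
    have hs0 : 0 < s := hs.1
    have hs1 : s ≤ 1 := hs.2
    have : Iinn (a * s) < Iinn (b * s) :=
      Iinn_mono (by positivity) (by nlinarith) (by nlinarith)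
    nlinarith
  · refine ⟨1, ⟨by norm_num, le_refl 1⟩, ?_⟩
    have : Iinn (a * 1) < Iinn (b * 1) := Iinn_mono (by nlinarith) (by nlinarith) (by nlinarith)
    nlinarith

end DensityAux

namespace DensityAux

lemma V_eq (ρ : ℝ) (hρ : ρ ≠ 0) : V ρ = 2 * π * ρ ^ 2 * F ρ := by
  have h1 : ∀ τ : ℝ, (∫ v in (-(π/2))..(π/2), τ * Real.sin (τ * Real.cos v)) = τ * Iinn τ := by
    intro τ; exact intervalIntegral.integral_const_mul τ _
  have h2 : (∫ τ in (0:ℝ)..ρ, τ * Iinn τ) = ρ • ∫ s in (0:ℝ)..1, (ρ * s) * Iinn (ρ * s) := by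
    rw [intervalIntegral.integral_comp_mul_left (fun τ => τ * Iinn τ) hρ]
    rw [mul_zero, mul_one, smul_smul, mul_inv_cancel₀ hρ, one_smul]
  have h3 : (∫ s in (0:ℝ)..1, (ρ * s) * Iinn (ρ * s)) = ρ * F ρ := by
    rw [F, ← intervalIntegral.integral_const_mul]
    congr 1; ext s; ring
  simp only [V, h1, h2, h3, smul_eq_mul]
  ring

end DensityAux

open DensityAux in
/-- The optimal packing density `δ_q = V(π/q)·q²/(8π²)` of the `S²×R` space group
`1q.I.1` (ball radius `π/q`, Dirichlet–Voronoi prism of volume `8π²/q²`) is strictly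
decreasing in the rotation order `q ≥ 3`. -/
theorem density_1qI1_strictly_decreasing :
    ∀ q q' : ℕ, 3 ≤ q → q < q' →
      V (π / q') * (q' : ℝ) ^ 2 / (8 * π ^ 2) < V (π / q) * (q : ℝ) ^ 2 / (8 * π ^ 2) := by
  intro q q' hq hqq'
  have hπ := Real.pi_pos
  have hq0 : (0:ℝ) < q := by exact_mod_cast (by omega : 0 < q)
  have hq'0 : (0:ℝ) < q' := by exact_mod_cast (by omega : 0 < q')
  have hqq : (q:ℝ) < q' := by exact_mod_cast hqq'
  have hq3 : (3:ℝ) ≤ q := by exact_mod_cast hq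
  have ha : 0 < π / q' := by positivity
  have hab : π / q' < π / q := by
    apply div_lt_div_of_pos_left hπ hq0 hqq
  have hb : π / q ≤ π / 2 := by
    apply div_le_div_of_nonneg_left hπ.le (by norm_num) (by linarith)
  rw [V_eq _ (ne_of_gt ha), V_eq _ (ne_of_gt (ha.trans hab))]
  have key : F (π / q') < F (π / q) := F_mono ha hab hb
  have e1 : (π / q') ^ 2 * (q':ℝ) ^ 2 = π ^ 2 := by field_simp
  have e2 : (π / q) ^ 2 * (q:ℝ) ^ 2 = π ^ 2 := by field_simp
  have expand : ∀ x y : ℝ, 2 * π * x ^ 2 * F x * y ^ 2 / (8 * π ^ 2)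
      = (x ^ 2 * y ^ 2) * F x * (2 * π) / (8 * π ^ 2) := by intro x y; ring
  rw [expand, expand, e1, e2]
  have hpos : 0 < π ^ 2 * (2 * π) / (8 * π ^ 2) := by positivity
  calc π ^ 2 * F (π / q') * (2 * π) / (8 * π ^ 2)
      = F (π / q') * (π ^ 2 * (2 * π) / (8 * π ^ 2)) := by ring
    _ < F (π / q) * (π ^ 2 * (2 * π) / (8 * π ^ 2)) := by
        exact mul_lt_mul_of_pos_right key hpos
    _ = π ^ 2 * F (π / q) * (2 * π) / (8 * π ^ 2) := by ring
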